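/- arXiv:2404.18791 — 2 statements merged into one kernel-verified Lean document; each statement's English description precedes it below -/
import Mathlib

section
/- Let h: ℝⁿ → [0,1] be measurable and define H(x) = E_{ε ~ N(0, σ²I)}[h(x + ε)]. Then the function x ↦ σ·Φ⁻¹(H(x)) is 1-Lipschitz with respect to the Euclidean norm, where Φ⁻¹ is the inverse standard Gaussian CDF (taking values in the extended reals, with the Lipschitz bound interpreted on points where H(x) ∈ (0,1)). -/
open MeasureTheory ProbabilityTheory Real Set Filter
open scoped ENNReal

theorem lintegral_pi_prod : ∀ {n : ℕ} (μ : Fin n → Measure ℝ) [∀ i, SigmaFinite (μ i)]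
    (g : Fin n → ℝ → ℝ≥0∞), (∀ i, Measurable (g i)) →
    ∫⁻ t : Fin n → ℝ, ∏ i, g i (t i) ∂Measure.pi μ = ∏ i, ∫⁻ x, g i x ∂μ i := by
  intro n
  induction n with
  | zero => intro μ _ g hg; simp
  | succ m ih =>
      intro μ _ g hg
      have hmp := (MeasureTheory.measurePreserving_piFinSuccAbove μ 0).symm
      rw [← hmp.lintegral_comp (by
        exact Finset.measurable_prod _ fun i _ => (hg i).comp (measurable_pi_apply i))]
      simp_rw [MeasurableEquiv.piFinSuccAbove_symm_apply, Fin.insertNthEquiv,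
        Fin.prod_univ_succ, Fin.insertNth_zero, Equiv.coe_fn_mk,
        Fin.zero_succAbove, cast_eq, Fin.cons_zero, Fin.cons_succ]
      have key := lintegral_prod_mul (μ := μ 0) (ν := Measure.pi fun j : Fin m => μ j.succ)
        (f := g 0) (g := fun w : Fin m → ℝ => ∏ x : Fin m, g x.succ (w x))
        ((hg 0).aemeasurable)
        (Finset.measurable_prod Finset.univ
          (fun i _ => (hg i.succ).comp (measurable_pi_apply i))).aemeasurable
      rw [key, ih (fun i => μ i.succ) (fun i => g i.succ) (fun i => hg i.succ)]

/-- The isotropic Gaussian measure `N(0, σ²I)` on `ℝⁿ` (as `EuclideanSpace`). -/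
noncomputable def gaussMeasure (n : ℕ) (σ : ℝ) : Measure (EuclideanSpace ℝ (Fin n)) :=
  (Measure.pi fun _ : Fin n => gaussianReal 0 (σ ^ 2).toNNReal).map
    (EuclideanSpace.equiv (Fin n) ℝ).symm

theorem pi_gauss_withDensity {n : ℕ} {σ : ℝ} (hσ : 0 < σ) :
    (Measure.pi fun _ : Fin n => gaussianReal 0 (σ ^ 2).toNNReal) =
      (Measure.pi fun _ : Fin n => (volume : Measure ℝ)).withDensity
        (fun t => ∏ i, gaussianPDF 0 (σ ^ 2).toNNReal (t i)) := by
  have hv : (σ ^ 2).toNNReal ≠ 0 := by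
    simp [Real.toNNReal_eq_zero, not_le, pow_pos hσ, hσ.ne']
  refine Measure.pi_eq fun s hs => ?_
  rw [withDensity_apply _ (MeasurableSet.univ_pi hs)]
  have hpt : ∀ t : Fin n → ℝ, (Set.univ.pi s).indicator
      (fun t : Fin n → ℝ => ∏ i, gaussianPDF 0 (σ ^ 2).toNNReal (t i)) t
      = ∏ i, (s i).indicator (gaussianPDF 0 (σ ^ 2).toNNReal) (t i) := by
    intro t
    by_cases ht : t ∈ Set.univ.pi s
    · rw [Set.indicator_of_mem ht]
      exact Finset.prod_congr rfl fun i _ =>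
        (Set.indicator_of_mem (ht i (Set.mem_univ i)) _).symm
    · rw [Set.indicator_of_notMem ht]
      obtain ⟨i, hi⟩ : ∃ i, t i ∉ s i := by
        by_contra hc
        push_neg at hc
        exact ht fun i _ => hc i
      exact (Finset.prod_eq_zero (Finset.mem_univ i)
        (by rw [Set.indicator_of_notMem hi])).symm
  rw [← lintegral_indicator (MeasurableSet.univ_pi hs)]
  simp_rw [hpt]
  rw [lintegral_pi_prod _ _ (fun i => (measurable_gaussianPDF _ _).indicator (hs i))]
  refine Finset.prod_congr rfl fun i _ => ?_
  rw [lintegral_indicator (hs i), ← gaussianReal_apply _ hv]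

theorem withDensity_map_equiv {α β : Type*} [MeasurableSpace α] [MeasurableSpace β]
    {μ : Measure α} {ν : Measure β} (e : α ≃ᵐ β) (hmp : MeasurePreserving e μ ν)
    {g : β → ℝ≥0∞} (hg : Measurable g) :
    (μ.withDensity (g ∘ e)).map e = ν.withDensity g := by
  ext s hs
  rw [Measure.map_apply e.measurable hs, withDensity_apply _ (e.measurable hs),
    withDensity_apply _ hs]
  have := MeasurePreserving.setLIntegral_comp_emb hmp e.measurableEmbedding g (e ⁻¹' s)
  rw [Set.image_preimage_eq _ e.surjective] at this
  exact this

theorem gaussMeasure_eq_withDensity {n : ℕ} {σ : ℝ} (hσ : 0 < σ) :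
    gaussMeasure n σ = (volume : Measure (EuclideanSpace ℝ (Fin n))).withDensity
      (fun x => ∏ i, gaussianPDF 0 (σ ^ 2).toNNReal (x i)) := by
  rw [gaussMeasure, pi_gauss_withDensity hσ]
  have hcoe : ⇑(EuclideanSpace.equiv (Fin n) ℝ).symm
      = ⇑(MeasurableEquiv.toLp 2 (Fin n → ℝ)).symm.symm := rfl
  rw [hcoe]
  exact withDensity_map_equiv (g := fun x : EuclideanSpace ℝ (Fin n) =>
      ∏ i, gaussianPDF 0 (σ ^ 2).toNNReal (x i))
    (MeasurableEquiv.toLp 2 (Fin n → ℝ)).symm.symm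
    (EuclideanSpace.volume_preserving_symm_measurableEquiv_toLp (Fin n)).symm
    (Finset.measurable_prod _ fun i _ =>
      (measurable_gaussianPDF _ _).comp ((measurable_pi_apply i).comp (WithLp.measurable_ofLp 2 _)))

section density
variable {n : ℕ} {σ : ℝ}

/-- The real density of the isotropic Gaussian. -/
noncomputable def gaussDr (n : ℕ) (σ : ℝ) (x : EuclideanSpace ℝ (Fin n)) : ℝ :=
  ∏ i, gaussianPDFReal 0 (σ ^ 2).toNNReal (x i)

theorem gaussDr_eq (hσ : 0 < σ) (x : EuclideanSpace ℝ (Fin n)) :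
    gaussDr n σ x = ((Real.sqrt (2 * π * σ ^ 2))⁻¹) ^ n
      * Real.exp (-‖x‖ ^ 2 / (2 * σ ^ 2)) := by
  have hc : ((σ ^ 2).toNNReal : ℝ) = σ ^ 2 := Real.coe_toNNReal _ (sq_nonneg σ)
  have hnorm : ‖x‖ ^ 2 = ∑ i, (x i) ^ 2 := by
    rw [EuclideanSpace.norm_eq, Real.sq_sqrt (by positivity)]
    simp [Real.norm_eq_abs, sq_abs]
  simp only [gaussDr, gaussianPDFReal, hc, sub_zero]
  rw [Finset.prod_mul_distrib, Finset.prod_const, Finset.card_univ, Fintype.card_fin,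
    ← Real.exp_sum, hnorm, ← Finset.sum_div, Finset.sum_neg_distrib]

theorem gaussDr_nonneg (x : EuclideanSpace ℝ (Fin n)) : 0 ≤ gaussDr n σ x :=
  Finset.prod_nonneg fun i _ => gaussianPDFReal_nonneg _ _ _

theorem measurable_gaussDr : Measurable (gaussDr n σ) :=
  Finset.measurable_prod _ fun i _ =>
    (measurable_gaussianPDFReal _ _).comp ((measurable_pi_apply i).comp (WithLp.measurable_ofLp 2 _))

theorem gaussMeasure_eq_withDensity' (hσ : 0 < σ) :
    gaussMeasure n σ = (volume : Measure (EuclideanSpace ℝ (Fin n))).withDensity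
      (fun x => ENNReal.ofReal (gaussDr n σ x)) := by
  rw [gaussMeasure_eq_withDensity hσ]
  congr 1
  funext x
  rw [gaussDr, ENNReal.ofReal_prod_of_nonneg fun i _ => gaussianPDFReal_nonneg _ _ _]
  rfl

theorem gaussDr_shift (hσ : 0 < σ) (x v : EuclideanSpace ℝ (Fin n)) :
    gaussDr n σ (x - v) = gaussDr n σ x
      * Real.exp ((inner ℝ v x - ‖v‖ ^ 2 / 2) / σ ^ 2) := by
  rw [gaussDr_eq hσ, gaussDr_eq hσ]
  have hip : ‖x - v‖ ^ 2 = ‖x‖ ^ 2 - 2 * inner ℝ x v + ‖v‖ ^ 2 := norm_sub_sq_real x v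
  have hcomm : (inner ℝ x v : ℝ) = inner ℝ v x := real_inner_comm v x
  have hσ2 : (σ : ℝ) ^ 2 ≠ 0 := by positivity
  have hexp : -‖x - v‖ ^ 2 / (2 * σ ^ 2)
      = -‖x‖ ^ 2 / (2 * σ ^ 2) + (inner ℝ v x - ‖v‖ ^ 2 / 2) / σ ^ 2 := by
    rw [hip, hcomm]
    field_simp
    ring
  rw [hexp, Real.exp_add]
  ring

end density

theorem gauss_lintegral_shift {n : ℕ} {σ : ℝ} (hσ : 0 < σ)
    (v : EuclideanSpace ℝ (Fin n)) {f : EuclideanSpace ℝ (Fin n) → ℝ≥0∞}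
    (hf : Measurable f) :
    ∫⁻ x, f (x + v) ∂(gaussMeasure n σ)
      = ∫⁻ x, f x * ENNReal.ofReal (Real.exp ((inner ℝ v x - ‖v‖ ^ 2 / 2) / σ ^ 2))
          ∂(gaussMeasure n σ) := by
  have hD : Measurable fun x : EuclideanSpace ℝ (Fin n) =>
      ENNReal.ofReal (gaussDr n σ x) := measurable_gaussDr.ennreal_ofReal
  have hiv : Measurable fun x : EuclideanSpace ℝ (Fin n) =>
      ENNReal.ofReal (Real.exp ((inner ℝ v x - ‖v‖ ^ 2 / 2) / σ ^ 2)) := by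
    have : Continuous fun x : EuclideanSpace ℝ (Fin n) =>
        Real.exp ((inner ℝ v x - ‖v‖ ^ 2 / 2) / σ ^ 2) :=
      Real.continuous_exp.comp
        (((continuous_const.inner continuous_id).sub continuous_const).div_const _)
    exact this.measurable.ennreal_ofReal
  rw [gaussMeasure_eq_withDensity' hσ,
    lintegral_withDensity_eq_lintegral_mul (g := fun x => f (x + v)) _ hD
      (hf.comp (measurable_add_const v)),
    lintegral_withDensity_eq_lintegral_mul (g := fun x => f x
        * ENNReal.ofReal (Real.exp ((inner ℝ v x - ‖v‖ ^ 2 / 2) / σ ^ 2))) _ hD (hf.mul hiv)]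
  have key : ∀ x : EuclideanSpace ℝ (Fin n),
      (fun x => f x * (ENNReal.ofReal (gaussDr n σ (x - v))))
        (x + v) = ((fun x => ENNReal.ofReal (gaussDr n σ x)) * fun x => f (x + v)) x := by
    intro x
    simp only [Pi.mul_apply, add_sub_cancel_right]
    ring
  calc ∫⁻ x, ((fun x => ENNReal.ofReal (gaussDr n σ x)) * fun x => f (x + v)) x
      = ∫⁻ x, f x * (ENNReal.ofReal (gaussDr n σ (x - v))) := by
        have hshift := lintegral_add_right_eq_self (μ := volume)
          (fun x => f x * ENNReal.ofReal (gaussDr n σ (x - v))) v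
        simp only [add_sub_cancel_right] at hshift
        rw [← hshift]
        exact lintegral_congr fun x => by simp only [Pi.mul_apply]; ring
    _ = ∫⁻ x, ((fun x => ENNReal.ofReal (gaussDr n σ x)) * fun x => f x
          * ENNReal.ofReal (Real.exp ((inner ℝ v x - ‖v‖ ^ 2 / 2) / σ ^ 2))) x := by
        refine lintegral_congr fun x => ?_
        simp only [Pi.mul_apply, gaussDr_shift hσ x v,
          ENNReal.ofReal_mul (gaussDr_nonneg x)]
        ring

/-- The standard Gaussian cumulative distribution function `Φ`. -/
noncomputable def stdGaussCDF : ℝ → ℝ := fun t => cdf (gaussianReal 0 1) t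

theorem gaussianReal_Iic (hσ : 0 < σ) (r : ℝ) :
    gaussianReal 0 (σ ^ 2).toNNReal (Set.Iic r)
      = ENNReal.ofReal (stdGaussCDF (r / σ)) := by
  have hmap := gaussianReal_map_const_mul (μ := 0) (v := 1) σ
  have hnn : (NNReal.mk (σ ^ 2) (sq_nonneg σ)) * 1 = (σ ^ 2).toNNReal := by
    ext
    simp [Real.coe_toNNReal _ (sq_nonneg σ)]
  rw [mul_zero, hnn] at hmap
  rw [← hmap, Measure.map_apply (measurable_const_mul σ) measurableSet_Iic]
  have hpre : (fun x => σ * x) ⁻¹' Set.Iic r = Set.Iic (r / σ) := by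
    ext x
    simp [Set.mem_Iic, le_div_iff₀' hσ]
  rw [hpre, ← ofReal_cdf (gaussianReal 0 1) (r / σ)]
  rfl

theorem gauss_halfspace {n : ℕ} {σ : ℝ} (hσ : 0 < σ)
    {v : EuclideanSpace ℝ (Fin n)} (hv : v ≠ 0) (a : ℝ) :
    gaussMeasure n σ {x | (inner ℝ v x : ℝ) ≤ a}
      = ENNReal.ofReal (stdGaussCDF (a / (σ * ‖v‖))) := by
  have hn : n ≠ 0 := by
    rintro rfl
    exact hv (Subsingleton.elim v 0)
  have hvn : (0 : ℝ) < ‖v‖ := norm_pos_iff.mpr hv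
  set i₀ : Fin n := ⟨0, Nat.pos_of_ne_zero hn⟩
  set u : EuclideanSpace ℝ (Fin n) := ‖v‖⁻¹ • v with hu_def
  have hu : ‖u‖ = 1 := by
    rw [hu_def, norm_smul, norm_inv, norm_norm, inv_mul_cancel₀ hvn.ne']
  -- orthonormal basis with b i₀ = u
  have hortho : Orthonormal ℝ (Set.restrict {i₀} (fun _ : Fin n => u)) := by
    constructor
    · intro i
      exact hu
    · intro i j hij
      exact absurd (Subtype.ext (by
        have hi := i.2
        have hj := j.2
        simp only [Set.mem_singleton_iff] at hi hj
        rw [hi, hj])) hij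
  obtain ⟨b, hb⟩ := hortho.exists_orthonormalBasis_extension_of_card_eq
    (by simp [finrank_euclideanSpace_fin])
  have hbi₀ : b i₀ = u := hb i₀ rfl
  -- the half space and its rotated version
  have hinner_cont : Continuous fun x : EuclideanSpace ℝ (Fin n) => (inner ℝ v x : ℝ) :=
    continuous_const.inner continuous_id
  have hA : MeasurableSet {x : EuclideanSpace ℝ (Fin n) | (inner ℝ v x : ℝ) ≤ a} :=
    measurableSet_le hinner_cont.measurable measurable_const
  have hS : MeasurableSet {t : EuclideanSpace ℝ (Fin n) | ‖v‖ * t i₀ ≤ a} := by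
    have : Continuous fun t : EuclideanSpace ℝ (Fin n) => ‖v‖ * t i₀ :=
      continuous_const.mul ((continuous_apply i₀).comp (EuclideanSpace.equiv (Fin n) ℝ).continuous)
    exact measurableSet_le this.measurable measurable_const
  have hDmeas : Measurable fun x : EuclideanSpace ℝ (Fin n) =>
      ENNReal.ofReal (gaussDr n σ x) := measurable_gaussDr.ennreal_ofReal
  have hTemb : MeasurableEmbedding ⇑b.repr.symm :=
    b.repr.symm.toHomeomorph.measurableEmbedding
  have hpre : ⇑b.repr.symm ⁻¹' {x | (inner ℝ v x : ℝ) ≤ a}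
      = {t : EuclideanSpace ℝ (Fin n) | ‖v‖ * t i₀ ≤ a} := by
    ext t
    simp only [Set.mem_preimage, Set.mem_setOf_eq]
    have hveq : v = ‖v‖ • u := by
      rw [hu_def, smul_smul, mul_inv_cancel₀ hvn.ne', one_smul]
    have hival : (inner ℝ v (b.repr.symm t) : ℝ) = ‖v‖ * t i₀ := by
      conv_lhs => rw [hveq]
      rw [real_inner_smul_left, ← hbi₀, ← OrthonormalBasis.repr_apply_apply,
        LinearIsometryEquiv.apply_symm_apply]
    rw [hival]
  have key : gaussMeasure n σ {x | (inner ℝ v x : ℝ) ≤ a}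
      = gaussMeasure n σ {t : EuclideanSpace ℝ (Fin n) | ‖v‖ * t i₀ ≤ a} := by
    rw [gaussMeasure_eq_withDensity' hσ, withDensity_apply _ hA, withDensity_apply _ hS]
    have hcomp := MeasurePreserving.setLIntegral_comp_emb
      (b.measurePreserving_repr_symm) hTemb
      (fun x => ENNReal.ofReal (gaussDr n σ x))
      (⇑b.repr.symm ⁻¹' {x | (inner ℝ v x : ℝ) ≤ a})
    rw [Set.image_preimage_eq _ b.repr.symm.surjective] at hcomp
    rw [← hcomp, hpre]
    refine setLIntegral_congr_fun hS (fun t ht => ?_)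
    rw [gaussDr_eq hσ, gaussDr_eq hσ, LinearIsometryEquiv.norm_map]
  rw [key, gaussMeasure,
    Measure.map_apply (EuclideanSpace.equiv (Fin n) ℝ).symm.continuous.measurable hS]
  have hpre2 : ⇑(EuclideanSpace.equiv (Fin n) ℝ).symm ⁻¹'
      {t : EuclideanSpace ℝ (Fin n) | ‖v‖ * t i₀ ≤ a}
      = Function.eval i₀ ⁻¹' (Set.Iic (a / ‖v‖)) := by
    ext t
    simp only [Set.mem_preimage, Set.mem_setOf_eq, Function.eval, Set.mem_Iic]
    rw [mul_comm, ← le_div_iff₀ hvn]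
    rfl
  rw [hpre2, Set.eval_preimage, Measure.pi_pi]
  rw [Fintype.prod_eq_single i₀ (fun x hx => by
    rw [Function.update_of_ne hx]
    exact measure_univ)]
  rw [Function.update_self, gaussianReal_Iic hσ, div_div, mul_comm ‖v‖ σ]

/-- The inverse `Φ⁻¹` of the standard Gaussian CDF. -/
noncomputable def stdGaussCDFInv : ℝ → ℝ := Function.invFun stdGaussCDF

theorem stdGaussCDF_strictMono : StrictMono stdGaussCDF := by
  intro s t hst
  have hIic : (gaussianReal 0 1) (Set.Iic t)
      = (gaussianReal 0 1) (Set.Iic s) + (gaussianReal 0 1) (Set.Ioc s t) := by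
    rw [← measure_union (by exact Set.Iic_disjoint_Ioc le_rfl) measurableSet_Ioc,
      Set.Iic_union_Ioc_eq_Iic hst.le]
  have hpos : 0 < (gaussianReal 0 1) (Set.Ioc s t) := by
    rw [pos_iff_ne_zero]
    intro hzero
    have := (gaussianReal_absolutelyContinuous' 0 one_ne_zero) hzero
    rw [Real.volume_Ioc] at this
    exact (ENNReal.ofReal_pos.mpr (by linarith)).ne' this
  have h1 : ENNReal.ofReal (stdGaussCDF s) < ENNReal.ofReal (stdGaussCDF t) := by
    rw [stdGaussCDF, stdGaussCDF, ofReal_cdf, ofReal_cdf, hIic]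
    exact ENNReal.lt_add_right (measure_ne_top _ _) hpos.ne'
  exact (ENNReal.ofReal_lt_ofReal_iff_of_nonneg (cdf_nonneg _ _)).mp h1

theorem stdGaussCDF_lipschitz (s t : ℝ) (hst : s ≤ t) :
    stdGaussCDF t - stdGaussCDF s ≤ (Real.sqrt (2 * π))⁻¹ * (t - s) := by
  have hb : (gaussianReal 0 1) (Set.Ioc s t)
      = ENNReal.ofReal (∫ x in Set.Ioc s t, gaussianPDFReal 0 1 x) :=
    gaussianReal_apply_eq_integral 0 one_ne_zero _
  have hIic : stdGaussCDF t - stdGaussCDF s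
      = ((gaussianReal 0 1) (Set.Ioc s t)).toReal := by
    rw [stdGaussCDF, stdGaussCDF, cdf_eq_real, cdf_eq_real, measureReal_def, measureReal_def,
      ← ENNReal.toReal_sub_of_le (measure_mono (Set.Iic_subset_Iic.mpr hst))
        (measure_ne_top _ _)]
    congr 1
    rw [← measure_diff (Set.Iic_subset_Iic.mpr hst) measurableSet_Iic.nullMeasurableSet
      (measure_ne_top _ _)]
    congr 1
    ext x
    simp only [Set.mem_diff, Set.mem_Iic, Set.mem_Ioc, not_le]
    tauto
  rw [hIic, hb, ENNReal.toReal_ofReal (setIntegral_nonneg measurableSet_Ioc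
    (fun x _ => gaussianPDFReal_nonneg _ _ _))]
  have hbound : ∀ x ∈ Set.Ioc s t, gaussianPDFReal 0 1 x ≤ (Real.sqrt (2 * π))⁻¹ := by
    intro x _
    rw [gaussianPDFReal]
    have h1 : Real.exp (-(x - 0) ^ 2 / (2 * (1:NNReal))) ≤ 1 := by
      rw [Real.exp_le_one_iff]
      have : (0:ℝ) ≤ (x - 0) ^ 2 := sq_nonneg _
      have h2 : ((1:NNReal):ℝ) = 1 := rfl
      rw [h2]
      nlinarith
    calc (Real.sqrt (2 * π * (1:NNReal)))⁻¹ * Real.exp (-(x - 0) ^ 2 / (2 * (1:NNReal)))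
        ≤ (Real.sqrt (2 * π * (1:NNReal)))⁻¹ * 1 := by
          refine mul_le_mul_of_nonneg_left h1 (by positivity)
      _ = (Real.sqrt (2 * π))⁻¹ := by norm_num
  calc ∫ x in Set.Ioc s t, gaussianPDFReal 0 1 x
      ≤ ∫ _x in Set.Ioc s t, (Real.sqrt (2 * π))⁻¹ := by
        refine setIntegral_mono_on ((integrable_gaussianPDFReal 0 1).integrableOn)
          (integrableOn_const (by rw [Real.volume_Ioc]; exact ENNReal.ofReal_ne_top))
          measurableSet_Ioc hbound
    _ = (Real.sqrt (2 * π))⁻¹ * (t - s) := by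
        rw [setIntegral_const, measureReal_def, Real.volume_Ioc, smul_eq_mul,
          ENNReal.toReal_ofReal (by linarith), mul_comm]

theorem stdGaussCDF_continuous : Continuous stdGaussCDF := by
  refine LipschitzWith.continuous (K := ⟨(Real.sqrt (2 * π))⁻¹, by positivity⟩) ?_
  refine LipschitzWith.of_dist_le_mul fun s t => ?_
  rw [Real.dist_eq, Real.dist_eq]
  rcases le_total s t with hst | hst
  · rw [abs_of_nonpos (by linarith [(stdGaussCDF_strictMono.monotone hst)]),
      abs_of_nonpos (by linarith)]
    have := stdGaussCDF_lipschitz s t hst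
    show _ ≤ (Real.sqrt (2 * π))⁻¹ * _
    linarith
  · rw [abs_of_nonneg (by linarith [(stdGaussCDF_strictMono.monotone hst)]),
      abs_of_nonneg (by linarith)]
    have := stdGaussCDF_lipschitz t s hst
    show _ ≤ (Real.sqrt (2 * π))⁻¹ * _
    linarith

theorem stdGaussCDF_surj {p : ℝ} (hp : p ∈ Set.Ioo (0:ℝ) 1) : ∃ t, stdGaussCDF t = p := by
  obtain ⟨a, ha⟩ : ∃ a, stdGaussCDF a < p := by
    have := (tendsto_cdf_atBot (μ := gaussianReal 0 1)).eventually_lt_const hp.1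
    exact this.exists
  obtain ⟨b, hb⟩ : ∃ b, p < stdGaussCDF b := by
    have := (tendsto_cdf_atTop (μ := gaussianReal 0 1)).eventually_const_lt hp.2
    exact this.exists
  have hab : a ≤ b := by
    by_contra hc
    push_neg at hc
    exact absurd (stdGaussCDF_strictMono hc) (by linarith)
  obtain ⟨t, _, ht⟩ := intermediate_value_Icc hab stdGaussCDF_continuous.continuousOn
    ⟨ha.le, hb.le⟩
  exact ⟨t, ht⟩

theorem stdGaussCDF_invFun_eq {p : ℝ} (hp : p ∈ Set.Ioo (0:ℝ) 1) :
    stdGaussCDF (stdGaussCDFInv p) = p :=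
  Function.invFun_eq (stdGaussCDF_surj hp)

instance gaussMeasure_isProbability (n : ℕ) (σ : ℝ) :
    IsProbabilityMeasure (gaussMeasure n σ) := by
  rw [gaussMeasure]
  exact Measure.isProbabilityMeasure_map
    (EuclideanSpace.equiv (Fin n) ℝ).symm.continuous.measurable.aemeasurable

theorem key_onesided
    (n : ℕ) (σ : ℝ) (hσ : 0 < σ)
    (h : EuclideanSpace ℝ (Fin n) → ℝ) (hmeas : Measurable h)
    (hbd : ∀ x, h x ∈ Set.Icc (0 : ℝ) 1)
    (H : EuclideanSpace ℝ (Fin n) → ℝ)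
    (hH : ∀ x, H x = ∫ ε, h (x + ε) ∂(gaussMeasure n σ)) :
    ∀ x y : EuclideanSpace ℝ (Fin n),
      H x ∈ Set.Ioo (0 : ℝ) 1 → H y ∈ Set.Ioo (0 : ℝ) 1 →
      σ * stdGaussCDFInv (H y) - σ * stdGaussCDFInv (H x) ≤ ‖x - y‖ := by
  intro x y hx hy
  by_cases hveq : x - y = 0
  · have hxy : x = y := sub_eq_zero.mp hveq
    rw [hxy, sub_self, sub_self, norm_zero]
  · set v := x - y with hv_def
    have hvn : (0 : ℝ) < ‖v‖ := norm_pos_iff.mpr hveq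
    set α := stdGaussCDFInv (H y) with hα_def
    set β := stdGaussCDFInv (H x) with hβ_def
    have hΦα : stdGaussCDF α = H y := stdGaussCDF_invFun_eq hy
    have hΦβ : stdGaussCDF β = H x := stdGaussCDF_invFun_eq hx
    set τ := σ * ‖v‖ * α with hτ_def
    set cl := Real.exp ((τ - ‖v‖ ^ 2 / 2) / σ ^ 2) with hcl_def
    set L := fun ε : EuclideanSpace ℝ (Fin n) =>
      Real.exp ((inner ℝ v ε - ‖v‖ ^ 2 / 2) / σ ^ 2) with hL_def
    set g := fun ε : EuclideanSpace ℝ (Fin n) => h (y + ε) with hg_def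
    set A := {ε : EuclideanSpace ℝ (Fin n) | (inner ℝ v ε : ℝ) ≤ τ} with hA_def
    have hinner_cont : Continuous fun ε : EuclideanSpace ℝ (Fin n) => (inner ℝ v ε : ℝ) :=
      continuous_const.inner continuous_id
    have hA : MeasurableSet A := measurableSet_le hinner_cont.measurable measurable_const
    have hLmeas : Measurable L :=
      (Real.continuous_exp.comp ((hinner_cont.sub continuous_const).div_const _)).measurable
    have hgmeas : Measurable g := hmeas.comp (measurable_const_add y)
    have hσv : (0 : ℝ) < σ * ‖v‖ := mul_pos hσ hvn
    -- bounded integral facts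
    have hofReal_int : ∀ z : EuclideanSpace ℝ (Fin n),
        ∫⁻ ε, ENNReal.ofReal (h (z + ε)) ∂(gaussMeasure n σ) = ENNReal.ofReal (H z) := by
      intro z
      have hint : Integrable (fun ε => h (z + ε)) (gaussMeasure n σ) := by
        refine (integrable_const (1 : ℝ)).mono'
          ((hmeas.comp (measurable_const_add z)).aestronglyMeasurable) ?_
        refine ae_of_all _ fun ε => ?_
        rw [Real.norm_eq_abs, abs_le]
        exact ⟨by linarith [(hbd (z + ε)).1], (hbd (z + ε)).2⟩
      rw [hH z, ofReal_integral_eq_lintegral_ofReal hint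
        (ae_of_all _ fun ε => (hbd (z + ε)).1)]
    -- F1 : measure of A
    have F1 : gaussMeasure n σ A = ENNReal.ofReal (H y) := by
      rw [hA_def, gauss_halfspace hσ hveq τ, hτ_def,
        mul_div_cancel_left₀ α (by positivity : σ * ‖v‖ ≠ 0), hΦα]
    -- F2 : lintegral of g
    have F2 : ∫⁻ ε, ENNReal.ofReal (g ε) ∂(gaussMeasure n σ) = ENNReal.ofReal (H y) :=
      hofReal_int y
    -- F3 : lintegral of g * L
    have F3 : ∫⁻ ε, ENNReal.ofReal (g ε) * ENNReal.ofReal (L ε) ∂(gaussMeasure n σ)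
        = ENNReal.ofReal (H x) := by
      have hshift := gauss_lintegral_shift hσ v
        (f := fun ε => ENNReal.ofReal (g ε)) hgmeas.ennreal_ofReal
      have heq : (fun ε => ENNReal.ofReal (g (ε + v)))
          = fun ε => ENNReal.ofReal (h (x + ε)) := by
        funext ε
        congr 1
        rw [hg_def]
        congr 1
        rw [hv_def]
        abel
      rw [← hshift]
      simp_rw [heq]
      exact hofReal_int x
    -- F4 : lintegral of indicator A * L
    have F4 : ∫⁻ ε, A.indicator (fun ε => ENNReal.ofReal (L ε)) ε ∂(gaussMeasure n σ)
        = ENNReal.ofReal (stdGaussCDF (α - ‖v‖ / σ)) := by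
      have hshift := gauss_lintegral_shift hσ v
        (f := A.indicator (fun _ => (1 : ℝ≥0∞)))
        ((measurable_one).indicator hA)
      have heq2 : (fun ε => A.indicator (fun _ => (1 : ℝ≥0∞)) ε
            * ENNReal.ofReal (Real.exp ((inner ℝ v ε - ‖v‖ ^ 2 / 2) / σ ^ 2)))
          = fun ε => A.indicator (fun ε => ENNReal.ofReal (L ε)) ε := by
        funext ε
        by_cases hmem : ε ∈ A
        · simp [Set.indicator_of_mem hmem, hL_def]
        · simp [Set.indicator_of_notMem hmem]
      rw [heq2] at hshift
      rw [← hshift]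
      have hA' : (fun ε => A.indicator (fun _ => (1 : ℝ≥0∞)) (ε + v))
          = Set.indicator {ε : EuclideanSpace ℝ (Fin n) | (inner ℝ v ε : ℝ) ≤ τ - ‖v‖ ^ 2}
            (fun _ => (1 : ℝ≥0∞)) := by
        funext ε
        have hmem_iff : (ε + v ∈ A) ↔ (inner ℝ v ε : ℝ) ≤ τ - ‖v‖ ^ 2 := by
          rw [hA_def, Set.mem_setOf_eq, inner_add_right, real_inner_self_eq_norm_sq]
          constructor <;> intro <;> linarith
        by_cases hmem : (inner ℝ v ε : ℝ) ≤ τ - ‖v‖ ^ 2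
        · rw [Set.indicator_of_mem (hmem_iff.mpr hmem)]
          exact (Set.indicator_of_mem
            (show ε ∈ {ε : EuclideanSpace ℝ (Fin n) | (inner ℝ v ε : ℝ) ≤ τ - ‖v‖ ^ 2}
              from hmem) (fun _ => (1 : ℝ≥0∞))).symm
        · rw [Set.indicator_of_notMem (fun hc => hmem (hmem_iff.mp hc))]
          exact (Set.indicator_of_notMem
            (show ε ∉ {ε : EuclideanSpace ℝ (Fin n) | (inner ℝ v ε : ℝ) ≤ τ - ‖v‖ ^ 2}
              from hmem) (fun _ => (1 : ℝ≥0∞))).symm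
      simp_rw [hA']
      rw [lintegral_indicator (measurableSet_le hinner_cont.measurable measurable_const),
        setLIntegral_one, gauss_halfspace hσ hveq (τ - ‖v‖ ^ 2)]
      congr 2
      rw [hτ_def]
      field_simp
    -- F5 : pointwise inequality
    have F5 : ∀ ε, A.indicator L ε + cl * g ε ≤ g ε * L ε
        + cl * A.indicator (fun _ => (1 : ℝ)) ε := by
      intro ε
      have hg0 : 0 ≤ g ε := (hbd _).1
      have hg1 : g ε ≤ 1 := (hbd _).2
      have hcl0 : 0 < cl := Real.exp_pos _
      by_cases hmem : ε ∈ A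
      · have hLle : L ε ≤ cl := by
          rw [hL_def, hcl_def]
          refine Real.exp_le_exp.mpr (div_le_div_of_nonneg_right ?_ (by positivity))
          have := hmem
          rw [hA_def, Set.mem_setOf_eq] at this
          linarith
        rw [Set.indicator_of_mem hmem, Set.indicator_of_mem hmem]
        have hL0 : 0 < L ε := Real.exp_pos _
        nlinarith
      · have hLge : cl ≤ L ε := by
          rw [hL_def, hcl_def]
          refine Real.exp_le_exp.mpr (div_le_div_of_nonneg_right ?_ (by positivity))
          have := hmem
          rw [hA_def, Set.mem_setOf_eq] at this
          push_neg at this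
          linarith
        rw [Set.indicator_of_notMem hmem, Set.indicator_of_notMem hmem]
        have hL0 : 0 < L ε := Real.exp_pos _
        nlinarith
    -- combine
    have hmeas1 : Measurable (A.indicator fun ε => ENNReal.ofReal (L ε)) :=
      hLmeas.ennreal_ofReal.indicator hA
    have hmeas2 : Measurable fun ε => ENNReal.ofReal (g ε) * ENNReal.ofReal (L ε) :=
      hgmeas.ennreal_ofReal.mul hLmeas.ennreal_ofReal
    have lhs_eq : ∫⁻ ε, (A.indicator (fun ε => ENNReal.ofReal (L ε)) ε
          + ENNReal.ofReal cl * ENNReal.ofReal (g ε)) ∂(gaussMeasure n σ)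
        = ENNReal.ofReal (stdGaussCDF (α - ‖v‖ / σ))
          + ENNReal.ofReal cl * ENNReal.ofReal (H y) := by
      rw [lintegral_add_left hmeas1, F4,
        lintegral_const_mul _ hgmeas.ennreal_ofReal, F2]
    have rhs_eq : ∫⁻ ε, (ENNReal.ofReal (g ε) * ENNReal.ofReal (L ε)
          + ENNReal.ofReal cl * A.indicator (fun _ => (1 : ℝ≥0∞)) ε) ∂(gaussMeasure n σ)
        = ENNReal.ofReal (H x) + ENNReal.ofReal cl * ENNReal.ofReal (H y) := by
      rw [lintegral_add_left hmeas2, F3,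
        lintegral_const_mul (ENNReal.ofReal cl)
          (show Measurable (A.indicator fun _ : EuclideanSpace ℝ (Fin n) => (1 : ℝ≥0∞))
            from measurable_one.indicator hA),
        lintegral_indicator hA, setLIntegral_one, F1]
    have main : ENNReal.ofReal (stdGaussCDF (α - ‖v‖ / σ))
          + ENNReal.ofReal cl * ENNReal.ofReal (H y)
        ≤ ENNReal.ofReal (H x) + ENNReal.ofReal cl * ENNReal.ofReal (H y) := by
      rw [← lhs_eq, ← rhs_eq]
      refine lintegral_mono fun ε => ?_
      have hg0 : 0 ≤ g ε := (hbd _).1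
      have hL0 : 0 ≤ L ε := (Real.exp_pos _).le
      have hcl0 : 0 ≤ cl := (Real.exp_pos _).le
      have e1 : A.indicator (fun ε => ENNReal.ofReal (L ε)) ε
          + ENNReal.ofReal cl * ENNReal.ofReal (g ε)
          = ENNReal.ofReal (A.indicator L ε + cl * g ε) := by
        have hind : A.indicator (fun ε => ENNReal.ofReal (L ε)) ε
            = ENNReal.ofReal (A.indicator L ε) := by
          by_cases hmem : ε ∈ A
          · rw [Set.indicator_of_mem hmem, Set.indicator_of_mem hmem]
          · rw [Set.indicator_of_notMem hmem, Set.indicator_of_notMem hmem,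
              ENNReal.ofReal_zero]
        rw [hind, ← ENNReal.ofReal_mul hcl0,
          ← ENNReal.ofReal_add (Set.indicator_nonneg (fun a _ => (Real.exp_pos _).le) ε)
            (mul_nonneg hcl0 hg0)]
      have e2 : ENNReal.ofReal (g ε) * ENNReal.ofReal (L ε)
          + ENNReal.ofReal cl * (A.indicator (fun _ => (1 : ℝ≥0∞)) ε)
          = ENNReal.ofReal (g ε * L ε + cl * A.indicator (fun _ => (1 : ℝ)) ε) := by
        have hind2 : A.indicator (fun _ => (1 : ℝ≥0∞)) ε
            = ENNReal.ofReal (A.indicator (fun _ => (1 : ℝ)) ε) := by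
          by_cases hmem : ε ∈ A
          · rw [Set.indicator_of_mem hmem, Set.indicator_of_mem hmem, ENNReal.ofReal_one]
          · rw [Set.indicator_of_notMem hmem, Set.indicator_of_notMem hmem,
              ENNReal.ofReal_zero]
        rw [hind2, ← ENNReal.ofReal_mul hg0, ← ENNReal.ofReal_mul hcl0,
          ← ENNReal.ofReal_add (mul_nonneg hg0 hL0)
            (mul_nonneg hcl0 (Set.indicator_nonneg (fun _ _ => zero_le_one) ε))]
      rw [e1, e2]
      exact ENNReal.ofReal_le_ofReal (F5 ε)
    have hcancel : ENNReal.ofReal (stdGaussCDF (α - ‖v‖ / σ)) ≤ ENNReal.ofReal (H x) :=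
      (ENNReal.add_le_add_iff_right (by
        exact ENNReal.mul_ne_top ENNReal.ofReal_ne_top ENNReal.ofReal_ne_top)).mp main
    have hΦle : stdGaussCDF (α - ‖v‖ / σ) ≤ stdGaussCDF β := by
      rw [hΦβ]
      exact (ENNReal.ofReal_le_ofReal_iff hx.1.le).mp hcancel
    have hαβ : α - ‖v‖ / σ ≤ β := stdGaussCDF_strictMono.le_iff_le.mp hΦle
    have : σ * α - σ * β ≤ ‖v‖ := by
      have h2 : σ * (α - β) ≤ σ * (‖v‖ / σ) :=
        mul_le_mul_of_nonneg_left (by linarith) hσ.le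
      rw [mul_div_cancel₀ _ hσ.ne'] at h2
      linarith
    linarith [this]

theorem smoothed_phiinv_lipschitz
    (n : ℕ) (σ : ℝ) (hσ : 0 < σ)
    (h : EuclideanSpace ℝ (Fin n) → ℝ) (hmeas : Measurable h)
    (hbd : ∀ x, h x ∈ Set.Icc (0 : ℝ) 1)
    (H : EuclideanSpace ℝ (Fin n) → ℝ)
    (hH : ∀ x, H x = ∫ ε, h (x + ε) ∂(gaussMeasure n σ)) :
    ∀ x y : EuclideanSpace ℝ (Fin n),
      H x ∈ Set.Ioo (0 : ℝ) 1 → H y ∈ Set.Ioo (0 : ℝ) 1 →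
      |σ * stdGaussCDFInv (H x) - σ * stdGaussCDFInv (H y)| ≤ ‖x - y‖ := by
  intro x y hx hy
  have k1 := key_onesided n σ hσ h hmeas hbd H hH x y hx hy
  have k2 := key_onesided n σ hσ h hmeas hbd H hH y x hy hx
  rw [norm_sub_rev] at k2
  exact abs_sub_le_iff.mpr ⟨k2, k1⟩
end

section
/- For all p ∈ (1/2, 1), the inequality Φ⁻¹(p) > √(π/2)·(2p − 1) holds, where Φ⁻¹ is the inverse of the standard Gaussian CDF. Moreover, equality of the derivatives holds at p = 1/2 and both sides vanish at p = 1/2. -/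
open MeasureTheory ProbabilityTheory

open Set Filter Topology

namespace PhiAux

/-- The standard Gaussian pdf. -/
noncomputable def f : ℝ → ℝ := gaussianPDFReal 0 1

lemma f_cont : Continuous f := by
  rw [f, gaussianPDFReal_def]
  fun_prop

lemma f_pos (x : ℝ) : 0 < f x := gaussianPDFReal_pos 0 1 x one_ne_zero

lemma f_int : Integrable f := integrable_gaussianPDFReal 0 1

lemma f_zero : f 0 = (Real.sqrt (2 * Real.pi))⁻¹ := by
  simp [f, gaussianPDFReal]

lemma f_lt_f_zero {t : ℝ} (ht : t ≠ 0) : f t < f 0 := by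
  simp only [f, gaussianPDFReal, NNReal.coe_one, mul_one, sub_zero]
  have hs : 0 < (Real.sqrt (2 * Real.pi))⁻¹ := by
    rw [inv_pos]
    exact Real.sqrt_pos.2 (by positivity)
  apply mul_lt_mul_of_pos_left _ hs
  apply Real.exp_lt_exp.2
  have : 0 < t ^ 2 := by positivity
  nlinarith

lemma stdGaussCDF_eq (t : ℝ) : stdGaussCDF t = ∫ x in Iic t, f x := by
  rw [stdGaussCDF, cdf_eq_real, measureReal_def, gaussianReal_apply_eq_integral 0 one_ne_zero,
    ENNReal.toReal_ofReal (integral_nonneg fun x => gaussianPDFReal_nonneg 0 1 x)]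
  rfl

lemma hasDerivAt_cdf (t : ℝ) : HasDerivAt stdGaussCDF (f t) t := by
  have h : ∀ u : ℝ, (∫ x in Iic (0:ℝ), f x) + ∫ x in (0:ℝ)..u, f x = stdGaussCDF u := by
    intro u
    rw [stdGaussCDF_eq, ← intervalIntegral.integral_Iic_sub_Iic f_int.integrableOn f_int.integrableOn]
    ring
  have := ((f_cont.integral_hasStrictDerivAt 0 t).hasDerivAt).const_add (∫ x in Iic (0:ℝ), f x)
  exact this.congr_of_eventuallyEq (Filter.Eventually.of_forall fun u => (h u).symm)

lemma cdf_cont : Continuous stdGaussCDF :=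
  continuous_iff_continuousAt.2 fun t => (hasDerivAt_cdf t).differentiableAt.continuousAt

lemma cdf_strictMono : StrictMono stdGaussCDF :=
  strictMono_of_deriv_pos fun t => by
    rw [(hasDerivAt_cdf t).deriv]; exact f_pos t

lemma cdf_zero : stdGaussCDF 0 = 1 / 2 := by
  have htot : ∫ x, f x = 1 := integral_gaussianPDFReal_eq_one 0 one_ne_zero
  have hsplit : (∫ x in Iic (0:ℝ), f x) + ∫ x in Ioi (0:ℝ), f x = ∫ x, f x :=
    intervalIntegral.integral_Iic_add_Ioi f_int.integrableOn f_int.integrableOn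
  have heven : ∀ x : ℝ, f (-x) = f x := by
    intro x
    simp only [f, gaussianPDFReal, NNReal.coe_one, mul_one, sub_zero, neg_sq]
  have hsymm : (∫ x in Iic (0:ℝ), f x) = ∫ x in Ioi (0:ℝ), f x := by
    calc (∫ x in Iic (0:ℝ), f x) = ∫ x in Iic (0:ℝ), f (-x) := by
          simp only [heven]
      _ = ∫ x in Ioi (-(0:ℝ)), f x := integral_comp_neg_Iic 0 f
      _ = ∫ x in Ioi (0:ℝ), f x := by rw [neg_zero]
  rw [stdGaussCDF_eq]
  rw [htot, ← hsymm] at hsplit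
  linarith

lemma cdf_mem_Ioo (t : ℝ) : stdGaussCDF t ∈ Ioo (0:ℝ) 1 :=
  ⟨lt_of_le_of_lt (cdf_nonneg (gaussianReal 0 1) (t - 1)) (cdf_strictMono (by linarith : t - 1 < t)),
    lt_of_lt_of_le (cdf_strictMono (by linarith : t < t + 1)) (cdf_le_one (gaussianReal 0 1) (t + 1))⟩

lemma cdf_surj {p : ℝ} (hp : p ∈ Ioo (0:ℝ) 1) : ∃ t, stdGaussCDF t = p := by
  have htb : Tendsto stdGaussCDF atBot (𝓝 0) := tendsto_cdf_atBot _
  have htt : Tendsto stdGaussCDF atTop (𝓝 1) := tendsto_cdf_atTop _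
  obtain ⟨a, ha⟩ := (htb.eventually_lt_const hp.1).exists
  obtain ⟨b, hb⟩ := (htt.eventually_const_lt hp.2).exists
  have hab : a ≤ b := (cdf_strictMono.lt_iff_lt.1 (ha.trans hb)).le
  obtain ⟨t, _, ht⟩ := intermediate_value_Icc hab cdf_cont.continuousOn
    (⟨ha.le, hb.le⟩ : p ∈ Icc (stdGaussCDF a) (stdGaussCDF b))
  exact ⟨t, ht⟩

lemma left_inv (t : ℝ) : stdGaussCDFInv (stdGaussCDF t) = t :=
  Function.leftInverse_invFun cdf_strictMono.injective t

lemma right_inv {p : ℝ} (hp : p ∈ Ioo (0:ℝ) 1) : stdGaussCDF (stdGaussCDFInv p) = p :=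
  Function.invFun_eq (cdf_surj hp)

lemma inv_half : stdGaussCDFInv (1 / 2) = 0 := by
  rw [← cdf_zero]; exact left_inv 0

lemma two_sqrt : 2 * Real.sqrt (Real.pi / 2) = Real.sqrt (2 * Real.pi) := by
  rw [show (2:ℝ) * Real.pi = 4 * (Real.pi / 2) by ring,
    Real.sqrt_mul (by norm_num : (0:ℝ) ≤ 4),
    show Real.sqrt 4 = 2 by
      rw [show (4:ℝ) = 2 ^ 2 by norm_num, Real.sqrt_sq (by norm_num : (0:ℝ) ≤ 2)]]

lemma key {x : ℝ} (hx : 0 < x) : stdGaussCDF x - 1 / 2 < x * f 0 := by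
  set F : ℝ → ℝ := fun t => t * f 0 - stdGaussCDF t with hF
  have hFd : ∀ t, HasDerivAt F (f 0 - f t) t := fun t => by
    have h := ((hasDerivAt_id t).mul_const (f 0)).sub (hasDerivAt_cdf t)
    simp only [id, one_mul] at h
    exact h
  have hmono : StrictMonoOn F (Ici (0:ℝ)) := by
    apply strictMonoOn_of_deriv_pos (convex_Ici 0)
    · exact (Continuous.sub (continuous_id.mul continuous_const) cdf_cont).continuousOn
    · intro t ht
      rw [interior_Ici] at ht
      rw [(hFd t).deriv]
      exact sub_pos.2 (f_lt_f_zero (ne_of_gt ht))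
  have h := hmono (self_mem_Ici) (mem_Ici.2 hx.le) hx
  simp only [hF, zero_mul, zero_sub, cdf_zero] at h
  linarith

lemma inv_contAt : ContinuousAt stdGaussCDFInv (1 / 2) := by
  rw [Metric.continuousAt_iff]
  intro ε hε
  have h1 : stdGaussCDF (-ε) < 1 / 2 := cdf_zero ▸ cdf_strictMono (by linarith)
  have h2 : (1:ℝ) / 2 < stdGaussCDF ε := cdf_zero ▸ cdf_strictMono hε
  refine ⟨min (stdGaussCDF ε - 1 / 2) (1 / 2 - stdGaussCDF (-ε)),
    lt_min (by linarith) (by linarith), ?_⟩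
  intro y hy
  rw [Real.dist_eq, abs_lt] at hy
  have hylt : y < stdGaussCDF ε := by
    have := hy.2.trans_le (min_le_left _ _); linarith
  have hygt : stdGaussCDF (-ε) < y := by
    have := hy.1; have h3 := min_le_right (stdGaussCDF ε - 1 / 2) (1 / 2 - stdGaussCDF (-ε))
    linarith
  have hy01 : y ∈ Ioo (0:ℝ) 1 :=
    ⟨(cdf_mem_Ioo (-ε)).1.trans hygt, hylt.trans (cdf_mem_Ioo ε).2⟩
  have hΦ := right_inv hy01
  have hlt : stdGaussCDFInv y < ε := cdf_strictMono.lt_iff_lt.1 (by rw [hΦ]; exact hylt)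
  have hgt : -ε < stdGaussCDFInv y := cdf_strictMono.lt_iff_lt.1 (by rw [hΦ]; exact hygt)
  rw [Real.dist_eq, inv_half, sub_zero, abs_lt]
  exact ⟨hgt, hlt⟩

end PhiAux

theorem phiInv_gt_linear :
    (∀ p ∈ Set.Ioo (1 / 2 : ℝ) 1,
      Real.sqrt (Real.pi / 2) * (2 * p - 1) < stdGaussCDFInv p) ∧
    HasDerivAt stdGaussCDFInv (Real.sqrt (2 * Real.pi)) (1 / 2) ∧
    HasDerivAt (fun p : ℝ => Real.sqrt (Real.pi / 2) * (2 * p - 1))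
      (Real.sqrt (2 * Real.pi)) (1 / 2) ∧
    stdGaussCDFInv (1 / 2) = 0 ∧
    Real.sqrt (Real.pi / 2) * (2 * (1 / 2 : ℝ) - 1) = 0 := by
  open PhiAux in
  refine ⟨?_, ?_, ?_, inv_half, by norm_num⟩
  · intro p hp
    have hp01 : p ∈ Ioo (0:ℝ) 1 := ⟨by linarith [hp.1], hp.2⟩
    set x := stdGaussCDFInv p with hxdef
    have hΦx : stdGaussCDF x = p := right_inv hp01
    have hx : 0 < x := by
      apply cdf_strictMono.lt_iff_lt.1
      rw [hΦx, cdf_zero]; exact hp.1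
    have hkey := key hx
    rw [hΦx, f_zero] at hkey
    have hS : 0 < Real.sqrt (2 * Real.pi) := Real.sqrt_pos.2 (by positivity)
    have h1 : Real.sqrt (2 * Real.pi) * (p - 1 / 2) < x := by
      have := mul_lt_mul_of_pos_left hkey hS
      rwa [mul_comm x _, ← mul_assoc, mul_inv_cancel₀ hS.ne', one_mul] at this
    calc Real.sqrt (Real.pi / 2) * (2 * p - 1)
        = (2 * Real.sqrt (Real.pi / 2)) * (p - 1 / 2) := by ring
      _ = Real.sqrt (2 * Real.pi) * (p - 1 / 2) := by rw [two_sqrt]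
      _ < x := h1
  · have hd : HasDerivAt stdGaussCDF (f 0) (stdGaussCDFInv (1 / 2)) := by
      rw [inv_half]; exact hasDerivAt_cdf 0
    have := HasDerivAt.of_local_left_inverse inv_contAt hd (ne_of_gt (f_pos 0))
      (by
        filter_upwards [Ioo_mem_nhds (by norm_num : (0:ℝ) < 1 / 2)
          (by norm_num : (1:ℝ) / 2 < 1)] with y hy
        exact right_inv hy)
    rwa [f_zero, inv_inv] at this
  · have h : HasDerivAt (fun p : ℝ => Real.sqrt (Real.pi / 2) * (2 * p - 1))
        (Real.sqrt (Real.pi / 2) * 2) (1 / 2) := by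
      simpa using (((hasDerivAt_id (1/2 : ℝ)).const_mul 2).sub_const 1).const_mul
        (Real.sqrt (Real.pi / 2))
    have he : Real.sqrt (Real.pi / 2) * 2 = Real.sqrt (2 * Real.pi) := by
      rw [← PhiAux.two_sqrt]; ring
    rwa [he] at h
end
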